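/- Let g : L → N be a surjective homomorphism of commutative monoids (written multiplicatively), let J be the kernel of the induced ring homomorphism ℤ[L] → ℤ[N] between monoid algebras, and let W be the kernel of the induced group homomorphism L^gp → N^gp between group completions. Then the map sending a class of Σᵢ λᵢ·lᵢ ∈ J (with λᵢ ∈ ℤ, lᵢ ∈ L) to Σᵢ λᵢ·(g(lᵢ) ⊗ [lᵢ]) is a well-defined ℤ[N]-module homomorphism ν_g : J/J² → ℤ[N] ⊗_ℤ W; in particular the image of each element of J lands in ℤ[N] ⊗_ℤ W and ν_g vanishes on J². -/

import Mathlib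

open scoped TensorProduct

/-- `ι : M →* G` realizes the commutative group `G` as the group completion of the
commutative monoid `M`. -/
def IsGroupCompletion {M G : Type*} [CommMonoid M] [CommGroup G] (ι : M →* G) : Prop :=
  ∀ (H : Type*) [CommGroup H] (f : M →* H), ∃! g : G →* H, g.comp ι = f

/-- The map `ℤ[L] → ℤ[N] ⊗_ℤ L^gp` sending `Σ λᵢ·lᵢ` to `Σ λᵢ·(g(lᵢ) ⊗ [lᵢ])`. -/
noncomputable def nuTilde {L N Lgp : Type*} [CommMonoid L] [CommMonoid N] [CommGroup Lgp]
    (g : L →* N) (ιL : L →* Lgp) :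
    MonoidAlgebra ℤ L →ₗ[ℤ] (MonoidAlgebra ℤ N ⊗[ℤ] Additive Lgp) :=
  (Finsupp.lsum ℤ fun l => LinearMap.toSpanSingleton ℤ _
    (MonoidAlgebra.single (g l) (1 : ℤ) ⊗ₜ[ℤ] Additive.ofMul (ιL l)))
    ∘ₗ (MonoidAlgebra.coeffLinearEquiv ℤ).toLinearMap

section aux
variable {L N Lgp : Type*} [CommMonoid L] [CommMonoid N] [CommGroup Lgp]
    (g : L →* N) (ιL : L →* Lgp)

lemma nuTilde_single (l : L) (c : ℤ) :
    nuTilde g ιL (MonoidAlgebra.single l c)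
      = c • (MonoidAlgebra.single (g l) (1 : ℤ) ⊗ₜ[ℤ] Additive.ofMul (ιL l)) := by
  have : (MonoidAlgebra.single l c : MonoidAlgebra ℤ L).coeff = Finsupp.single l c := rfl
  erw [nuTilde, LinearMap.comp_apply, LinearEquiv.coe_coe]
  change (Finsupp.lsum ℤ _) (Finsupp.single l c) = _
  rw [Finsupp.lsum_single, LinearMap.toSpanSingleton_apply]

lemma mapDomainRingHom_single (l : L) (c : ℤ) :
    MonoidAlgebra.mapDomainRingHom ℤ g (MonoidAlgebra.single l c)
      = MonoidAlgebra.single (g l) c := MonoidAlgebra.mapDomain_single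

lemma nuTilde_mul (a b : MonoidAlgebra ℤ L) :
    nuTilde g ιL (a * b)
      = MonoidAlgebra.mapDomainRingHom ℤ g a • nuTilde g ιL b
        + MonoidAlgebra.mapDomainRingHom ℤ g b • nuTilde g ιL a := by
  induction a using MonoidAlgebra.induction_linear with
  | zero => simp
  | add f h hf hh => simp only [add_mul, map_add, hf, hh, add_smul, smul_add]; abel
  | single l c =>
    induction b using MonoidAlgebra.induction_linear with
    | zero => simp
    | add f h hf hh => simp only [mul_add, map_add, hf, hh, add_smul, smul_add]; abel
    | single l' c' =>
      rw [MonoidAlgebra.single_mul_single, nuTilde_single, nuTilde_single, nuTilde_single,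
        mapDomainRingHom_single, mapDomainRingHom_single, map_mul, map_mul, ofMul_mul]
      simp only [TensorProduct.smul_tmul', smul_eq_mul, mul_smul_comm,
        MonoidAlgebra.single_mul_single, TensorProduct.tmul_add, mul_one, one_mul, smul_add,
        Finsupp.smul_single, smul_eq_mul, mul_comm (g l) (g l'), mul_comm c c']
      rw [MonoidAlgebra.smul_single, MonoidAlgebra.smul_single, MonoidAlgebra.smul_single, smul_eq_mul,
        smul_eq_mul, smul_eq_mul, mul_one, mul_comm c c', add_comm]

end aux

/-- For a surjective homomorphism `g : L → N` of commutative monoids with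
`J = ker(ℤ[L] → ℤ[N])` and `W = ker(L^gp → N^gp)`, the map `Σλᵢ·lᵢ ↦ Σλᵢ·(g(lᵢ) ⊗ lᵢ)`
sends `J` into `ℤ[N] ⊗_ℤ W`, vanishes on `J²`, and is `ℤ[N]`-semilinear; hence it
induces a well-defined `ℤ[N]`-module homomorphism `ν_g : J/J² → ℤ[N] ⊗_ℤ W`. -/
theorem stmt_0 {L N Lgp Ngp : Type*} [CommMonoid L] [CommMonoid N]
    [CommGroup Lgp] [CommGroup Ngp]
    (g : L →* N) (hg : Function.Surjective g)
    (ιL : L →* Lgp) (ιN : N →* Ngp)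
    (hL : IsGroupCompletion ιL) (hN : IsGroupCompletion ιN)
    (ggp : Lgp →* Ngp) (hcomm : ∀ l : L, ggp (ιL l) = ιN (g l)) :
    (∀ x ∈ RingHom.ker (MonoidAlgebra.mapDomainRingHom ℤ g),
        nuTilde g ιL x ∈ LinearMap.range
          (TensorProduct.map (LinearMap.id : MonoidAlgebra ℤ N →ₗ[ℤ] MonoidAlgebra ℤ N)
            ((Subgroup.toAddSubgroup (MonoidHom.ker ggp)).subtype.toIntLinearMap))) ∧
    (∀ x ∈ (RingHom.ker (MonoidAlgebra.mapDomainRingHom ℤ g)) ^ 2,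
        nuTilde g ιL x = 0) ∧
    (∀ x ∈ RingHom.ker (MonoidAlgebra.mapDomainRingHom ℤ g), ∀ m : L,
        nuTilde g ιL (MonoidAlgebra.single m (1 : ℤ) * x) =
          MonoidAlgebra.single (g m) (1 : ℤ) • nuTilde g ιL x) := by
  have hker : ∀ x ∈ RingHom.ker (MonoidAlgebra.mapDomainRingHom ℤ g),
      MonoidAlgebra.mapDomainRingHom ℤ g x = 0 := fun x hx => RingHom.mem_ker.mp hx
  refine ⟨?_, ?_, ?_⟩
  · -- lands in ℤ[N] ⊗ W
    intro x hx
    set F : Additive Lgp →ₗ[ℤ] Additive Ngp := (MonoidHom.toAdditive ggp).toIntLinearMap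
    set W := Subgroup.toAddSubgroup (MonoidHom.ker ggp)
    have hexact : Function.Exact (W.subtype.toIntLinearMap) F := by
      intro y
      constructor
      · intro hy
        refine ⟨⟨y, ?_⟩, rfl⟩
        simpa [W, F, MonoidHom.mem_ker] using hy
      · rintro ⟨⟨z, hz⟩, rfl⟩
        simpa [W, F, MonoidHom.mem_ker] using hz
    haveI : Module.Flat ℤ (MonoidAlgebra ℤ N) := inferInstance
    have htens := Module.Flat.lTensor_exact (MonoidAlgebra ℤ N) hexact
    have hzero : LinearMap.lTensor (MonoidAlgebra ℤ N) F (nuTilde g ιL x) = 0 := by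
      have hcomp : ∀ y : MonoidAlgebra ℤ L,
          LinearMap.lTensor (MonoidAlgebra ℤ N) F (nuTilde g ιL y)
            = nuTilde (MonoidHom.id N) ιN (MonoidAlgebra.mapDomainRingHom ℤ g y) := by
        intro y
        induction y using MonoidAlgebra.induction_linear with
        | zero => simp
        | add f h hf hh => simp [hf, hh, Finsupp.mapDomain_add, MonoidAlgebra.mapDomain_add]
        | single l c =>
          rw [nuTilde_single, map_smul, LinearMap.lTensor_tmul, mapDomainRingHom_single,
            nuTilde_single]
          simp [F, hcomm l]
      rw [hcomp, hker x hx, map_zero]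
    have := (htens (nuTilde g ιL x)).mp hzero
    obtain ⟨w, hw⟩ := this
    exact ⟨w, by rw [← hw]; rfl⟩
  · -- vanishes on J²
    intro x hx
    rw [pow_two] at hx
    refine Submodule.mul_induction_on hx ?_ ?_
    · intro a ha b hb
      rw [nuTilde_mul, hker a ha, hker b hb, zero_smul, zero_smul, add_zero]
    · intro a b ha hb
      rw [map_add, ha, hb, add_zero]
  · -- semilinearity
    intro x hx m
    rw [nuTilde_mul, hker x hx, zero_smul, add_zero, mapDomainRingHom_single]
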